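/- arXiv:1101.2994 — 5 statements merged into one kernel-verified Lean document; each statement's English description precedes it below -/
import Mathlib

section
/- Let G be a finite abelian group of order v, let D be a subset of G of size k, and let λ be a positive integer. Then D is a (v,k,λ)-difference set in G, i.e., every nonidentity element g of G has exactly λ representations g = x·y^{-1} with x,y ∈ D, if and only if χ(D)·conjugate(χ(D)) = k − λ for every nontrivial complex character χ of G, where χ(D) = Σ_{d∈D} χ(d). -/
section Aux

variable {G : Type*} [CommGroup G] [Fintype G] [DecidableEq G]

/-- conjugate of a character value is the value at the inverse. -/
lemma char_conj_eq (χ : G →* ℂ) (d : G) : (starRingEnd ℂ) (χ d) = χ d⁻¹ := by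
  have h1 : χ d ^ Fintype.card G = 1 := by
    rw [← map_pow, pow_card_eq_one, map_one]
  have habs : ‖χ d‖ = 1 :=
    Complex.norm_eq_one_of_pow_eq_one h1 Fintype.card_ne_zero
  have hinv : (starRingEnd ℂ) (χ d) = (χ d)⁻¹ := (Complex.inv_eq_conj habs).symm
  have h2 : χ d⁻¹ * χ d = 1 := by rw [← map_mul, inv_mul_cancel, map_one]
  rw [hinv, (eq_inv_of_mul_eq_one_left h2).symm]

/-- workaround for pow_left_injective usage above; we will instead prove abs directly. -/
lemma char_sum_eq (D : Finset G) (χ : G →* ℂ) :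
    (∑ d ∈ D, χ d) * (starRingEnd ℂ) (∑ d ∈ D, χ d) =
      ∑ g : G, (((D ×ˢ D).filter (fun xy : G × G => xy.1 * xy.2⁻¹ = g)).card : ℂ) * χ g := by
  have hconj : (starRingEnd ℂ) (∑ d ∈ D, χ d) = ∑ d ∈ D, χ d⁻¹ := by
    rw [map_sum]; exact Finset.sum_congr rfl fun d _ => char_conj_eq χ d
  rw [hconj, Finset.sum_mul_sum]
  have key : ∑ x ∈ D, ∑ y ∈ D, χ x * χ y⁻¹ = ∑ p ∈ D ×ˢ D, χ (p.1 * p.2⁻¹) := by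
    rw [Finset.sum_product]
    exact Finset.sum_congr rfl fun x _ => Finset.sum_congr rfl fun y _ => (map_mul χ _ _).symm
  rw [key, ← Finset.sum_fiberwise_of_maps_to
    (fun (p : G × G) (_ : p ∈ D ×ˢ D) => Finset.mem_univ (p.1 * p.2⁻¹))
    (fun p : G × G => χ (p.1 * p.2⁻¹))]
  refine Finset.sum_congr rfl fun g _ => ?_
  rw [Finset.sum_congr rfl (fun p hp => by
    rw [(Finset.mem_filter.mp hp).2]), Finset.sum_const, nsmul_eq_mul]

/-- first orthogonality -/
lemma char_sum_zero {χ : G →* ℂ} (hχ : χ ≠ 1) : ∑ g : G, χ g = 0 := by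
  obtain ⟨a, ha⟩ : ∃ a : G, χ a ≠ 1 := by
    by_contra h
    push_neg at h
    exact hχ (MonoidHom.ext fun g => by simp [h g])
  refine eq_zero_of_mul_eq_self_left ha ?_
  rw [Finset.mul_sum]
  rw [← Equiv.sum_comp (Equiv.mulLeft a) (fun g => χ g)]
  exact Finset.sum_congr rfl fun g _ => by simp [map_mul]

/-- diagonal count -/
lemma diag_card (D : Finset G) :
    ((D ×ˢ D).filter (fun xy : G × G => xy.1 * xy.2⁻¹ = 1)).card = D.card := by
  refine Finset.card_bij (fun p _ => p.1) ?_ ?_ ?_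
  · intro p hp
    exact (Finset.mem_product.mp (Finset.mem_filter.mp hp).1).1
  · intro p hp q hq h
    have hp' := mul_inv_eq_one.mp (Finset.mem_filter.mp hp).2
    have hq' := mul_inv_eq_one.mp (Finset.mem_filter.mp hq).2
    have h' : p.1 = q.1 := h
    exact Prod.ext h' (by rw [← hp', ← hq']; exact h')
  · intro b hb
    exact ⟨(b, b), Finset.mem_filter.mpr ⟨Finset.mem_product.mpr ⟨hb, hb⟩, by simp⟩, rfl⟩

end Aux

/-- **Characterization of difference sets by characters.**
Let `G` be a finite abelian group of order `v`, `D ⊆ G` of size `k`, and `lam` a positive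
integer. Then `D` is a `(v, k, lam)`-difference set in `G` (every nonidentity `g ∈ G` has
exactly `lam` representations `g = x * y⁻¹` with `x, y ∈ D`) if and only if
`χ(D) * conj (χ(D)) = k - lam` for every nontrivial complex character `χ` of `G`,
where `χ(D) = ∑ d ∈ D, χ d`. -/
theorem diff_set_iff_char_sum {G : Type*} [CommGroup G] [Fintype G] [DecidableEq G]
    (v k lam : ℕ) (hlam : 0 < lam) (hv : Fintype.card G = v)
    (D : Finset G) (hk : D.card = k) :
    (∀ g : G, g ≠ 1 →
        ((D ×ˢ D).filter (fun xy : G × G => xy.1 * xy.2⁻¹ = g)).card = lam) ↔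
      (∀ χ : G →* ℂ, χ ≠ 1 →
        (∑ d ∈ D, χ d) * (starRingEnd ℂ) (∑ d ∈ D, χ d) = (k : ℂ) - (lam : ℂ)) := by
  set N : G → ℕ := fun g => ((D ×ˢ D).filter (fun xy : G × G => xy.1 * xy.2⁻¹ = g)).card with hN
  have hN1 : N 1 = k := by rw [hN]; simpa using (diag_card D).trans hk
  constructor
  · -- forward
    intro hDS χ hχ
    rw [char_sum_eq D χ]
    rw [← Finset.add_sum_erase Finset.univ (fun g => (N g : ℂ) * χ g) (Finset.mem_univ (1:G))]
    rw [hN1, map_one, mul_one]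
    have h2 : ∑ g ∈ Finset.univ.erase 1, (N g : ℂ) * χ g
        = ∑ g ∈ Finset.univ.erase 1, (lam : ℂ) * χ g := by
      refine Finset.sum_congr rfl fun g hg => ?_
      simp only [hN]
      rw [hDS g (Finset.ne_of_mem_erase hg)]
    rw [h2, ← Finset.mul_sum]
    have h3 : ∑ g ∈ Finset.univ.erase 1, χ g = -1 := by
      have := char_sum_zero hχ
      rw [← Finset.add_sum_erase Finset.univ χ (Finset.mem_univ (1:G)), map_one] at this
      linear_combination this
    rw [h3]; ring
  · -- backward
    intro hchar g hg
    -- set up character group machinery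
    haveI : NeZero ((Monoid.exponent G : ℂ)) := by
      refine ⟨?_⟩
      exact_mod_cast Nat.cast_ne_zero.mpr (Monoid.exponent_ne_zero_of_finite (G := G))
    obtain ⟨e⟩ := CommGroup.monoidHom_mulEquiv_of_hasEnoughRootsOfUnity G ℂ
    haveI : Finite (G →* ℂˣ) := Finite.of_equiv G e.symm.toEquiv
    haveI : Fintype (G →* ℂˣ) := Fintype.ofFinite _
    have hcard : Fintype.card (G →* ℂˣ) = v := by
      rw [← hv]; exact Fintype.card_congr e.toEquiv
    -- second orthogonality
    have horth : ∀ a : G, ∑ χ : G →* ℂˣ, ((χ a : ℂ)) =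
        if a = 1 then (v : ℂ) else 0 := by
      intro a
      split_ifs with ha
      · subst ha; simp [hcard]
      · obtain ⟨χ₀, hχ₀⟩ := CommGroup.exists_apply_ne_one_of_hasEnoughRootsOfUnity G ℂ ha
        have hχ₀' : ((χ₀ a : ℂ)) ≠ 1 := by
          intro h; exact hχ₀ (Units.ext h)
        refine eq_zero_of_mul_eq_self_left hχ₀' ?_
        rw [Finset.mul_sum]
        rw [← Equiv.sum_comp (Equiv.mulLeft χ₀) (fun χ : G →* ℂˣ => ((χ a : ℂ)))]
        refine Finset.sum_congr rfl fun χ _ => ?_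
        simp [Units.val_mul]
    have hkey : ∀ χ : G →* ℂ, χ ≠ 1 → ∑ h : G, (N h : ℂ) * χ h = (k : ℂ) - (lam : ℂ) := by
      intro χ hχ
      simp only [hN]
      rw [← char_sum_eq D χ]
      exact hchar χ hχ
    set M : G → ℂ := fun h => (N h : ℂ) - (lam : ℂ) - ((k : ℂ) - (lam : ℂ)) *
      (if h = 1 then 1 else 0) with hM
    have hMsum : ∀ χ : G →* ℂˣ, χ ≠ 1 → ∑ h : G, M h * (χ h : ℂ) = 0 := by
      intro χ hχ
      set ψ : G →* ℂ := (Units.coeHom ℂ).comp χ with hψdef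
      have hψ1 : ψ ≠ 1 := by
        intro h
        apply hχ
        ext x
        have hx := congrArg (fun f : G →* ℂ => f x) h
        simp only [hψdef, MonoidHom.coe_comp, Function.comp_apply, Units.coeHom_apply,
          MonoidHom.one_apply] at hx
        simpa using Units.val_eq_one.mp hx
      have e1 : ∑ h : G, M h * (χ h : ℂ)
          = (∑ h : G, (N h : ℂ) * ψ h) - (lam : ℂ) * (∑ h : G, ψ h)
            - ((k:ℂ)-(lam:ℂ)) * ∑ h : G, (if h = 1 then (1:ℂ) else 0) * ψ h := by
        rw [Finset.mul_sum, Finset.mul_sum, ← Finset.sum_sub_distrib, ← Finset.sum_sub_distrib]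
        refine Finset.sum_congr rfl fun h _ => ?_
        show M h * ψ h = _
        rw [hM]; ring
      have e2 : ∑ h : G, (if h = 1 then (1:ℂ) else 0) * ψ h = 1 := by
        rw [Finset.sum_eq_single (1 : G)]
        · simp
        · intro b _ hb; simp [hb]
        · intro hb; exact absurd (Finset.mem_univ 1) hb
      rw [e1, e2, char_sum_zero hψ1, hkey ψ hψ1]
      ring
    have hconst : ∀ a : G, (v : ℂ) * M a = ∑ x : G, M x := by
      intro a
      have h1 : ∑ χ : G →* ℂˣ, (∑ x : G, M x * (χ x : ℂ)) * (χ a⁻¹ : ℂ)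
          = ∑ x : G, M x := by
        rw [Finset.sum_eq_single (1 : G →* ℂˣ)]
        · simp
        · intro χ _ hχ; rw [hMsum χ hχ, zero_mul]
        · intro hb; exact absurd (Finset.mem_univ _) hb
      have h2 : ∑ χ : G →* ℂˣ, (∑ x : G, M x * (χ x : ℂ)) * (χ a⁻¹ : ℂ)
          = ∑ x : G, M x * ∑ χ : G →* ℂˣ, ((χ (x * a⁻¹) : ℂ)) := by
        simp_rw [Finset.sum_mul]
        rw [Finset.sum_comm]
        refine Finset.sum_congr rfl fun x _ => ?_
        rw [Finset.mul_sum]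
        refine Finset.sum_congr rfl fun χ _ => ?_
        rw [map_mul, Units.val_mul]; ring
      rw [h2] at h1
      have h3 : ∀ x : G, ∑ χ : G →* ℂˣ, ((χ (x * a⁻¹) : ℂ)) = if x = a then (v:ℂ) else 0 := by
        intro x; rw [horth]
        by_cases hx : x = a
        · simp [hx]
        · rw [if_neg (by simpa [mul_inv_eq_one] using hx), if_neg hx]
      have h4 : ∑ x : G, M x * ∑ χ : G →* ℂˣ, ((χ (x * a⁻¹) : ℂ)) = (v : ℂ) * M a := by
        rw [Finset.sum_eq_single a]
        · rw [h3 a]; simp [mul_comm]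
        · intro b _ hb; rw [h3 b]; simp [hb]
        · intro hb; exact absurd (Finset.mem_univ _) hb
      rw [← h1, h4]
    have hM1 : M 1 = 0 := by rw [hM]; simp [hN1]
    have hvne : (v : ℂ) ≠ 0 := by
      have h0 : 0 < v := hv ▸ Fintype.card_pos
      exact_mod_cast Nat.cast_ne_zero.mpr h0.ne'
    have hMg : M g = 0 := by
      have h5 := (hconst g).trans (hconst 1).symm
      rw [hM1, mul_zero] at h5
      exact (mul_eq_zero.mp h5).resolve_left hvne
    have hfin : (N g : ℂ) = (lam : ℂ) := by
      rw [hM] at hMg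
      simp only [if_neg hg, mul_zero, sub_zero] at hMg
      linear_combination hMg
    have : N g = lam := by exact_mod_cast hfin
    simpa [hN] using this
end

section
/- Let p_1 be an odd prime, m ≥ 1, N = 2p_1^m, and let p be a prime with gcd(p,N) = 1 whose multiplicative order modulo N equals φ(N)/2 and such that −1 is not in the subgroup ⟨p⟩ of (ℤ/Nℤ)^*. Then for every odd integer j with 1 ≤ j ≤ N−1 there exist integers r ≥ 0 and t with 0 ≤ t ≤ m such that j ≡ p^r·p_1^t (mod N) or j ≡ −p^r·p_1^t (mod N). -/
lemma key_units (N p : ℕ) [NeZero N] (hpu : IsUnit (p : ZMod N))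
    (hord : orderOf (p : ZMod N) = N.totient / 2)
    (heven : 2 ∣ N.totient)
    (hnotin : ∀ k : ℕ, (p : ZMod N) ^ k ≠ -1)
    (u : (ZMod N)ˣ) :
    ∃ r : ℕ, (u : ZMod N) = (p : ZMod N) ^ r ∨ (u : ZMod N) = -((p : ZMod N) ^ r) := by
  set P := hpu.unit with hPdef
  have hPc : (P : ZMod N) = p := hpu.unit_spec
  have hordP : orderOf P = N.totient / 2 := by
    rw [← hord, ← hPc, orderOf_units]
  have htpos : 0 < N.totient := Nat.totient_pos.mpr (Nat.pos_of_ne_zero (NeZero.ne N))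
  have ht2 : 0 < N.totient / 2 := Nat.div_pos (Nat.le_of_dvd htpos heven) two_pos
  set H := Subgroup.zpowers P with hHdef
  have hcardH : Nat.card H = N.totient / 2 := by rw [Nat.card_zpowers, hordP]
  have hcardG : Nat.card (ZMod N)ˣ = N.totient := by
    rw [Nat.card_eq_fintype_card, ZMod.card_units_eq_totient]
  have hidx : H.index = 2 := by
    have h1 := Subgroup.card_mul_index H
    rw [hcardH, hcardG] at h1
    have h2 : N.totient / 2 * 2 = N.totient := Nat.div_mul_cancel heven
    exact Nat.eq_of_mul_eq_mul_left ht2 (h1.trans h2.symm)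
  have hmemiff : ∀ v : (ZMod N)ˣ, v ∈ H → ∃ k : ℕ, (v : ZMod N) = (p : ZMod N) ^ k := by
    intro v hv
    rw [← mem_powers_iff_mem_zpowers] at hv
    obtain ⟨k, hk⟩ := hv
    refine ⟨k, ?_⟩
    rw [← hk, ← hPc]
    push_cast
    ring
  have hneg : (-1 : (ZMod N)ˣ) ∉ H := by
    intro h
    obtain ⟨k, hk⟩ := hmemiff _ h
    apply hnotin k
    rw [← hk]
    simp
  by_cases hu : u ∈ H
  · obtain ⟨k, hk⟩ := hmemiff _ hu
    exact ⟨k, Or.inl hk⟩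
  · have hmul : u * (-1) ∈ H :=
      (Subgroup.mul_mem_iff_of_index_two hidx).mpr (iff_of_false hu hneg)
    obtain ⟨k, hk⟩ := hmemiff _ hmul
    refine ⟨k, Or.inr ?_⟩
    have hc : ((u * (-1) : (ZMod N)ˣ) : ZMod N) = -(u : ZMod N) := by simp
    rw [hc] at hk
    rw [← hk, neg_neg]

/-- **Classification of odd residues modulo `N = 2 p₁^m` in the index 2 case.**
Let `p₁` be an odd prime, `m ≥ 1`, `N = 2 p₁ ^ m`, and let `p` be a prime with
`gcd(p, N) = 1` whose multiplicative order modulo `N` equals `φ(N)/2` and such that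
`-1` is not in the subgroup `⟨p⟩` of `(ℤ/Nℤ)ˣ`. Then every odd integer `j` with
`1 ≤ j ≤ N - 1` satisfies `j ≡ p^r p₁^t (mod N)` or `j ≡ -p^r p₁^t (mod N)` for some
`r ≥ 0` and `0 ≤ t ≤ m`. -/
theorem odd_residues_classification (p1 m N p : ℕ) (hp1 : p1.Prime) (hp1odd : Odd p1)
    (hm : 1 ≤ m) (hN : N = 2 * p1 ^ m) (hp : p.Prime)
    (hgcd : Nat.gcd p N = 1) (hord : orderOf (p : ZMod N) = N.totient / 2)
    (hnotin : ∀ k : ℕ, (p : ZMod N) ^ k ≠ -1)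
    (j : ℕ) (hj1 : 1 ≤ j) (hj2 : j ≤ N - 1) (hjodd : Odd j) :
    ∃ r t : ℕ, t ≤ m ∧
      ((j : ZMod N) = (p : ZMod N) ^ r * (p1 : ZMod N) ^ t ∨
        (j : ZMod N) = -((p : ZMod N) ^ r * (p1 : ZMod N) ^ t)) := by
  have hp1three : 3 ≤ p1 := by
    have h2 := hp1.two_le
    have hne : p1 ≠ 2 := by rintro rfl; exact (by norm_num : ¬ Odd 2) hp1odd
    omega
  have hp1pos : 0 < p1 ^ m := Nat.pow_pos (by omega)
  have hNpos : 0 < N := by rw [hN]; positivity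
  have : NeZero N := ⟨hNpos.ne'⟩
  have hN3 : 2 < N := by
    have : 3 ≤ p1 ^ m := le_trans hp1three (Nat.le_self_pow (by omega) p1)
    omega
  have heven : 2 ∣ N.totient := (Nat.totient_even hN3).two_dvd
  have hpu : IsUnit (p : ZMod N) := (ZMod.isUnit_iff_coprime p N).mpr hgcd
  -- factor j
  set t := j.factorization p1 with htdef
  have hj0 : j ≠ 0 := by omega
  set u := j / p1 ^ t with hudef
  have hfact : p1 ^ t * u = j := Nat.ordProj_mul_ordCompl_eq_self j p1
  have hndvd : ¬ p1 ∣ u := Nat.not_dvd_ordCompl hp1 hj0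
  have hu0 : u ≠ 0 := by
    intro h; rw [h, mul_zero] at hfact; exact hj0 hfact.symm
  have huodd : ¬ 2 ∣ u := by
    intro h
    have h2 : 2 ∣ j := h.trans ⟨p1 ^ t, by rw [← hfact]; ring⟩
    have h3 := Nat.odd_iff.mp hjodd
    omega
  have hcop : Nat.Coprime u N := by
    rw [hN]
    refine Nat.Coprime.mul_right ?_ (Nat.Coprime.pow_right m ?_)
    · exact Nat.coprime_comm.mp ((Nat.Prime.coprime_iff_not_dvd Nat.prime_two).mpr huodd)
    · exact (Nat.coprime_comm.mp ((Nat.Prime.coprime_iff_not_dvd hp1).mpr hndvd))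
  have htle : t ≤ m := by
    by_contra hgt
    push_neg at hgt
    have h1 : p1 ^ (m + 1) ∣ j := dvd_trans (pow_dvd_pow p1 hgt) (Nat.ordProj_dvd j p1)
    have h2 : p1 ^ (m + 1) ≤ j := Nat.le_of_dvd (by omega) h1
    have h3 : 2 * p1 ^ m < p1 ^ (m + 1) := by
      rw [pow_succ, mul_comm (p1 ^ m) p1]
      exact (Nat.mul_lt_mul_right hp1pos).mpr (by omega)
    omega
  have huu : IsUnit (u : ZMod N) := (ZMod.isUnit_iff_coprime u N).mpr hcop
  obtain ⟨r, hr⟩ := key_units N p hpu hord heven hnotin huu.unit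
  rw [huu.unit_spec] at hr
  have hcast : (j : ZMod N) = (p1 : ZMod N) ^ t * (u : ZMod N) := by
    rw [← hfact]; push_cast; ring
  refine ⟨r, t, htle, ?_⟩
  rcases hr with h | h
  · left; rw [hcast, h]; ring
  · right; rw [hcast, h]; ring
end

section
/- Let p_1 be a prime with p_1 ≡ 3 (mod 4), m ≥ 1, N = 2p_1^m, and let p be a prime with p ≡ 3 (mod 4), gcd(p,N) = 1, whose multiplicative order modulo N equals φ(N)/2. Set f = φ(N)/2 and q = p^f, and let s be an odd positive integer. Then (q^s − 1)/2 ≡ p_1^m (mod N); consequently, for any primitive element γ of the field E = F_{q^s}, the element −1 of E lies in the cyclotomic class C_{p_1^m} of order N of E. -/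
/-- **`-1` lies in the cyclotomic class `C_{p₁^m}`.**
Let `p₁` be a prime with `p₁ ≡ 3 (mod 4)`, `m ≥ 1`, `N = 2 p₁ ^ m`, and let `p` be a
prime with `p ≡ 3 (mod 4)`, `gcd(p, N) = 1`, whose multiplicative order modulo `N` is
`φ(N)/2 = f`. Let `q = p ^ f` and let `s` be an odd positive integer. Then
`(q^s - 1)/2 ≡ p₁^m (mod N)`; consequently, for any finite field `E` of order `q^s`
with primitive element `γ`, the element `-1 = γ^{(q^s-1)/2}` of `E` lies in the
cyclotomic class `C_{p₁^m} = γ^{p₁^m} ⟨γ^N⟩` of order `N` of `E`. -/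
theorem neg_one_mem_cyclotomic_class (p1 m N p f q s : ℕ)
    (hp1 : p1.Prime) (hp1mod : p1 % 4 = 3) (hm : 1 ≤ m) (hN : N = 2 * p1 ^ m)
    (hp : p.Prime) (hpmod : p % 4 = 3) (hgcd : Nat.gcd p N = 1)
    (hord : orderOf (p : ZMod N) = N.totient / 2)
    (hf : f = N.totient / 2) (hq : q = p ^ f) (hs : Odd s) (hs0 : 0 < s) :
    (q ^ s - 1) / 2 ≡ p1 ^ m [MOD N] ∧
      ∀ (E : Type) (_ : Field E) (_ : Fintype E), Fintype.card E = q ^ s →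
        ∀ γ : Eˣ, orderOf γ = q ^ s - 1 →
          ∃ k : ℕ, (-1 : E) = (γ : E) ^ (p1 ^ m + N * k) := by
  -- basic facts
  have hp1_odd : p1 % 2 = 1 := by omega
  have hp1_3 : 3 ≤ p1 := Nat.le_of_eq (hp1mod.symm) |>.trans (Nat.mod_le _ _)
  have hp_3 : 3 ≤ p := Nat.le_of_eq (hpmod.symm) |>.trans (Nat.mod_le _ _)
  -- totient of N
  have hodd_pow : ∀ r : ℕ, Odd (p1 ^ r) := fun r => (Nat.odd_iff.mpr hp1_odd).pow
  have hcop : Nat.Coprime 2 (p1 ^ m) := by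
    simpa [Nat.coprime_two_left] using hodd_pow m
  have htot : N.totient = p1 ^ (m - 1) * (p1 - 1) := by
    rw [hN, Nat.totient_mul hcop, Nat.totient_two,
      Nat.totient_prime_pow hp1 hm, one_mul]
  have hfval : f = p1 ^ (m - 1) * ((p1 - 1) / 2) := by
    rw [hf, htot, Nat.mul_div_assoc _ (by omega : 2 ∣ p1 - 1)]
  have hfodd : Odd f := by
    rw [hfval]
    exact (hodd_pow _).mul (Nat.odd_iff.mpr (by omega))
  have hf1 : 1 ≤ f := hfodd.pos
  -- N ≥ 6
  have hN6 : 6 ≤ N := by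
    have : p1 ^ 1 ≤ p1 ^ m := Nat.pow_le_pow_right (by omega) hm
    simp only [pow_one] at this; omega
  have : NeZero N := ⟨by omega⟩
  -- q ≡ 1 mod N
  have hq1 : q ≡ 1 [MOD N] := by
    have h1 : (p : ZMod N) ^ f = 1 := by
      rw [hf, ← hord]; exact pow_orderOf_eq_one _
    have : ((q : ℕ) : ZMod N) = ((1 : ℕ) : ZMod N) := by
      push_cast [hq]; simpa using h1
    exact (ZMod.natCast_eq_natCast_iff _ _ _).mp this
  -- q^s ≡ 1 mod N
  have hqs1 : q ^ s ≡ 1 [MOD N] := by simpa using hq1.pow s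
  have hq3 : 3 ≤ q := by
    calc (3:ℕ) ≤ p := hp_3
    _ = p ^ 1 := (pow_one p).symm
    _ ≤ p ^ f := Nat.pow_le_pow_right (by omega) hf1
    _ = q := hq.symm
  have hqs3 : 3 ≤ q ^ s := le_trans hq3 (Nat.le_self_pow (by omega) q)
  -- q^s % 4 = 3
  have hmod4 : q ^ s % 4 = 3 := by
    have h4 : ((q ^ s : ℕ) : ZMod 4) = ((3 : ℕ) : ZMod 4) := by
      push_cast [hq]
      have hp4 : ((p : ℕ) : ZMod 4) = -1 := by
        have : ((p : ℕ) : ZMod 4) = ((p % 4 : ℕ) : ZMod 4) := (ZMod.natCast_mod _ _).symm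
        rw [this, hpmod]; decide
      rw [hp4, ← pow_mul, (hfodd.mul hs).neg_one_pow]
      decide
    have := (ZMod.natCast_eq_natCast_iff _ _ _).mp h4
    simpa [Nat.ModEq] using this
  -- obtain j with q^s - 1 = N * j
  obtain ⟨j, hj⟩ := (Nat.modEq_iff_dvd' (by omega)).mp hqs1.symm
  have hjodd : j % 2 = 1 := by
    set a := p1 ^ m with ha
    have haodd : a % 2 = 1 := Nat.odd_iff.mp (hodd_pow m)
    have hb : (a * j) % 2 = j % 2 := by
      rw [Nat.mul_mod, haodd, one_mul, Nat.mod_mod_of_dvd _ dvd_rfl]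
    have hjN : q ^ s - 1 = 2 * (a * j) := by rw [hj, hN]; ring
    omega
  -- e = p1^m + N * k
  set e := (q ^ s - 1) / 2 with he
  obtain ⟨k, hk⟩ : ∃ k, j = 2 * k + 1 := ⟨j / 2, by omega⟩
  have hekey : e = p1 ^ m + N * k := by
    have h2 : q ^ s - 1 = 2 * (p1 ^ m + N * k) := by
      rw [hj, hk, hN]; ring
    omega
  constructor
  · rw [hekey]; simp [Nat.ModEq, Nat.add_mul_mod_self_left]
  · intro E _ _ hcard γ hγ
    refine ⟨k, ?_⟩
    have h2e : 2 * e = q ^ s - 1 := by omega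
    have hpow1 : (γ : E) ^ (q ^ s - 1) = 1 := by
      rw [← hγ]
      have := pow_orderOf_eq_one γ
      exact_mod_cast congrArg (Units.coeHom E) this
    have hsq : (γ : E) ^ e * (γ : E) ^ e = 1 := by
      rw [← pow_add]
      have : e + e = q ^ s - 1 := by omega
      rw [this, hpow1]
    have hne : (γ : E) ^ e ≠ 1 := by
      intro h
      have hu : γ ^ e = 1 := Units.ext (by simpa using h)
      have hdvd : orderOf γ ∣ e := orderOf_dvd_of_pow_eq_one hu
      rw [hγ] at hdvd
      have he_pos : 0 < e := by omega
      have := Nat.le_of_dvd he_pos hdvd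
      omega
    rcases mul_self_eq_one_iff.mp hsq with h | h
    · exact absurd h hne
    · rw [← hekey, h]
end

section
/- For every positive integer m, the multiplicative order of 11 modulo 2·7^m equals 3·7^{m-1}, which is φ(2·7^m)/2; moreover −1 is not in the subgroup of (ℤ/2·7^mℤ)^* generated by 11. -/
lemma eleven_key : ∀ j : ℕ, ∃ c : ℤ, (11:ℤ) ^ (3 * 7 ^ j) = 1 + 7 ^ (j+1) * c ∧ ¬ (7:ℤ) ∣ c := by
  intro j
  induction j with
  | zero => exact ⟨190, by norm_num, by decide⟩
  | succ j ih =>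
    obtain ⟨c, hc, h7⟩ := ih
    set y : ℤ := 7 ^ (j+1) * c with hy
    refine ⟨c * (1 + 3*y + 5*y^2 + 5*y^3 + 3*y^4 + y^5) + 7^j * y^5 * c^2, ?_, ?_⟩
    · have h1 : 3 * 7 ^ (j+1) = (3 * 7 ^ j) * 7 := by ring
      rw [h1, pow_mul, hc]
      have hs : (7:ℤ) ^ (j+1) = 7 * 7 ^ j := by ring
      have hs2 : (7:ℤ) ^ (j+1+1) = 49 * 7 ^ j := by ring
      rw [hy, hs, hs2]
      ring
    · intro h
      apply h7
      have hyd : (7:ℤ) ∣ y := ⟨7 ^ j * c, by rw [hy]; ring⟩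
      have hrest : (7:ℤ) ∣ c * (3*y + 5*y^2 + 5*y^3 + 3*y^4 + y^5) + 7^j * y^5 * c^2 := by
        obtain ⟨t, ht⟩ := hyd
        exact ⟨c * (3*t + 35*t^2 + 245*t^3 + 1029*t^4 + 2401*t^5)
          + 7^j * (2401*t^5) * c^2, by rw [ht]; ring⟩
      have : c = (c * (1 + 3*y + 5*y^2 + 5*y^3 + 3*y^4 + y^5) + 7^j * y^5 * c^2)
          - (c * (3*y + 5*y^2 + 5*y^3 + 3*y^4 + y^5) + 7^j * y^5 * c^2) := by ring
      rw [this]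
      exact dvd_sub h hrest



/-- **The order of `11` modulo `2·7^m`.**
For every positive integer `m`, the multiplicative order of `11` modulo `2·7^m` equals
`3·7^(m-1)`, which is `φ(2·7^m)/2`; moreover `-1` is not in the subgroup of
`(ℤ/2·7^mℤ)ˣ` generated by `11` (equivalently, no power of `11` is `≡ -1`). -/
theorem orderOf_eleven_mod_two_mul_seven_pow (m : ℕ) (hm : 1 ≤ m) :
    orderOf (11 : ZMod (2 * 7 ^ m)) = 3 * 7 ^ (m - 1) ∧
    3 * 7 ^ (m - 1) = (2 * 7 ^ m).totient / 2 ∧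
    ∀ k : ℕ, (11 : ZMod (2 * 7 ^ m)) ^ k ≠ -1 := by
  haveI : NeZero (2 * 7 ^ m) := ⟨by positivity⟩
  have hNlb : 7 ≤ 7 ^ m := by
    calc 7 = 7 ^ 1 := (pow_one 7).symm
    _ ≤ 7 ^ m := Nat.pow_le_pow_right (by norm_num) hm
  have hm7 : 7 ^ m = 7 * 7 ^ (m - 1) := by
    conv_lhs => rw [show m = 1 + (m - 1) by omega]
    rw [pow_add, pow_one]
  -- Step A: 11 ^ (3 * 7^(m-1)) = 1
  obtain ⟨c, hc, h7c⟩ := eleven_key (m - 1)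
  rw [show m - 1 + 1 = m by omega] at hc
  have hdvd : ((2 * 7 ^ m : ℕ) : ℤ) ∣ 11 ^ (3 * 7 ^ (m - 1)) - 1 := by
    have h2 : (2 : ℤ) ∣ 11 ^ (3 * 7 ^ (m - 1)) - 1 := by
      have : Odd ((11 : ℤ) ^ (3 * 7 ^ (m - 1))) := Odd.pow (by decide)
      obtain ⟨t, ht⟩ := this
      exact ⟨t, by omega⟩
    have h7 : (7 : ℤ) ^ m ∣ 11 ^ (3 * 7 ^ (m - 1)) - 1 := ⟨c, by rw [hc]; ring⟩
    have hcop : IsCoprime (2 : ℤ) ((7 : ℤ) ^ m) := (by norm_num : IsCoprime (2:ℤ) (7:ℤ)).pow_right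
    push_cast
    exact hcop.mul_dvd h2 h7
  have hpow1 : (11 : ZMod (2 * 7 ^ m)) ^ (3 * 7 ^ (m - 1)) = 1 := by
    have := (ZMod.intCast_zmod_eq_zero_iff_dvd ((11:ℤ) ^ (3 * 7 ^ (m - 1)) - 1) (2 * 7 ^ m)).mpr hdvd
    push_cast at this
    linear_combination this
  -- Step B: 11 ^ (7^(m-1)) ≠ 1
  have hB : (11 : ZMod (2 * 7 ^ m)) ^ (7 ^ (m - 1)) ≠ 1 := by
    intro h
    have hd7 : 7 ∣ 2 * 7 ^ m := ⟨2 * 7 ^ (m - 1), by rw [hm7]; ring⟩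
    have := congrArg (ZMod.castHom hd7 (ZMod 7)) h
    rw [map_pow, map_one] at this
    have h11 : (ZMod.castHom hd7 (ZMod 7)) (11 : ZMod (2 * 7 ^ m)) = (11 : ZMod 7) :=
      map_ofNat _ 11
    rw [h11] at this
    have hq : 7 ^ (m - 1) % 3 = 1 := by
      rw [Nat.pow_mod]; norm_num
    obtain ⟨q, hq'⟩ : ∃ q, 7 ^ (m - 1) = 3 * q + 1 := ⟨7 ^ (m - 1) / 3, by omega⟩
    rw [hq', pow_add, pow_mul, pow_one] at this
    have h113 : (11 : ZMod 7) ^ 3 = 1 := by decide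
    rw [h113, one_pow, one_mul] at this
    exact (by decide : (11 : ZMod 7) ≠ 1) this
  -- Step C: for m ≥ 2, 11 ^ (3 * 7^(m-2)) ≠ 1
  have hC : 2 ≤ m → (11 : ZMod (2 * 7 ^ m)) ^ (3 * 7 ^ (m - 2)) ≠ 1 := by
    intro hm2 h
    obtain ⟨c', hc', h7c'⟩ := eleven_key (m - 2)
    rw [show m - 2 + 1 = m - 1 by omega] at hc'
    have hdvd' : ((2 * 7 ^ m : ℕ) : ℤ) ∣ 11 ^ (3 * 7 ^ (m - 2)) - 1 := by
      have := (ZMod.intCast_zmod_eq_zero_iff_dvd ((11:ℤ) ^ (3 * 7 ^ (m - 2)) - 1) (2 * 7 ^ m)).mp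
        (by push_cast [h]; ring)
      exact this
    have h7d : (7 : ℤ) ^ m ∣ (7 : ℤ) ^ (m - 1) * c' := by
      rw [show (7:ℤ) ^ (m-1) * c' = 11 ^ (3 * 7 ^ (m - 2)) - 1 by linarith [hc']]
      exact dvd_trans ⟨2, by push_cast; ring⟩ hdvd'
    have : (7:ℤ) ^ (m-1) * 7 ∣ (7:ℤ) ^ (m - 1) * c' := by
      rwa [show (7:ℤ) ^ (m-1) * 7 = 7 ^ m by rw [← pow_succ]; congr 1; omega]
    exact h7c' ((mul_dvd_mul_iff_left (by positivity : (7:ℤ)^(m-1) ≠ 0)).mp this)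
  -- order
  have horder : orderOf (11 : ZMod (2 * 7 ^ m)) = 3 * 7 ^ (m - 1) := by
    apply orderOf_eq_of_pow_and_pow_div_prime (by positivity) hpow1
    intro p hp hpd
    have hp37 : p = 3 ∨ p = 7 := by
      rcases (Nat.Prime.dvd_mul hp).mp hpd with h | h
      · left; exact (Nat.prime_dvd_prime_iff_eq hp (by norm_num)).mp h
      · right; exact (Nat.prime_dvd_prime_iff_eq hp (by norm_num)).mp (hp.dvd_of_dvd_pow h)
    rcases hp37 with rfl | rfl
    · rw [Nat.mul_div_cancel_left _ (by norm_num)]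
      exact hB
    · rcases Nat.lt_or_ge m 2 with h2 | h2
      · exfalso
        have : m = 1 := by omega
        subst this
        simp at hpd
      · have : 3 * 7 ^ (m - 1) / 7 = 3 * 7 ^ (m - 2) := by
          rw [show m - 1 = (m - 2) + 1 by omega, pow_succ]
          rw [show 3 * (7 ^ (m-2) * 7) = (3 * 7 ^ (m-2)) * 7 by ring]
          exact Nat.mul_div_cancel _ (by norm_num)
        rw [this]
        exact hC h2
  refine ⟨horder, ?_, ?_⟩
  -- totient
  · have hcop : Nat.Coprime 2 (7 ^ m) := Nat.Coprime.pow_right m (by decide)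
    rw [Nat.totient_mul hcop, Nat.totient_two, Nat.totient_prime_pow (by norm_num) hm]
    rw [show 7 - 1 = 6 by norm_num]
    rw [show 1 * (7 ^ (m-1) * 6) = 2 * (3 * 7 ^ (m-1)) by ring]
    rw [Nat.mul_div_cancel_left _ (by norm_num)]
  -- no power is -1
  · intro k hk
    have h2k : (11 : ZMod (2 * 7 ^ m)) ^ (k * 2) = 1 := by
      rw [pow_mul, hk]; ring
    have hdvd2 : orderOf (11 : ZMod (2 * 7 ^ m)) ∣ k * 2 := orderOf_dvd_of_pow_eq_one h2k
    rw [horder] at hdvd2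
    have hodd : ¬ 2 ∣ 3 * 7 ^ (m - 1) := by
      intro h
      have : Odd (3 * 7 ^ (m-1)) := Odd.mul (by decide) (Odd.pow (by decide))
      obtain ⟨t, ht⟩ := this
      omega
    have hcop2 : Nat.Coprime (3 * 7 ^ (m - 1)) 2 :=
      Nat.coprime_comm.mp ((Nat.prime_two.coprime_iff_not_dvd).mpr hodd)
    have hdk : orderOf (11 : ZMod (2 * 7 ^ m)) ∣ k := by
      rw [horder]
      exact Nat.Coprime.dvd_of_dvd_mul_right hcop2 hdvd2
    have : (11 : ZMod (2 * 7 ^ m)) ^ k = 1 := orderOf_dvd_iff_pow_eq_one.mp hdk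
    rw [this] at hk
    haveI : Fact (2 < 2 * 7 ^ m) := ⟨by omega⟩
    exact ZMod.neg_one_ne_one hk.symm
end

section
/- Let p_1 be a prime with p_1 ≡ 3 (mod 8), N = 2p_1, and let S ⊆ {1,…,p_1−1} be the set of nonzero quadratic residues modulo p_1. Let ξ_N ∈ ℂ be a primitive Nth root of unity and set ξ_{p_1} = ξ_N², and assume Σ_{j∈S} ξ_{p_1}^j = (−1 + i√(p_1))/2. Let I ⊆ {0,1,…,N−1} consist of 0, together with all odd j in [1,N−1] whose reduction modulo p_1 lies in S, together with all even j in [2,N−1] whose reduction modulo p_1 is a quadratic nonresidue modulo p_1. Then Σ_{i∈I} ξ_N^{-i} = 1 − i√(p_1). -/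
section Aux

/-- forward map for the odd part -/
def e1fun (p1 j : ℕ) : ℕ := if j < p1 then (p1 - j) / 2 else (3 * p1 - j) / 2

/-- forward map for the even part -/
def e2fun (p1 j : ℕ) : ℕ := p1 - j / 2

/-- inverse map for the odd part -/
def u1fun (p1 s : ℕ) : ℕ :=
  if (-2 * (s : ZMod p1)).val % 2 = 1 then (-2 * (s : ZMod p1)).val
  else (-2 * (s : ZMod p1)).val + p1

/-- inverse map for the even part -/
def u2fun (p1 t : ℕ) : ℕ :=
  if (-2 * (t : ZMod p1)).val % 2 = 0 then (-2 * (t : ZMod p1)).val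
  else (-2 * (t : ZMod p1)).val + p1

lemma toggle_lemma (p : ℕ) [Fact p.Prime] (hmod : p % 8 = 3) {e j : ZMod p}
    (h : 2 * e = -j) (hj : j ≠ 0) : IsSquare e ↔ IsSquare j := by
  have hp : p.Prime := Fact.out
  have hp3 : 3 ≤ p := by
    rcases Nat.lt_or_ge p 3 with h' | h'
    · interval_cases p <;> omega
    · exact h'
  have h2 : (2 : ZMod p) ≠ 0 := by
    have : ((2 : ℕ) : ZMod p) ≠ 0 := by
      rw [Ne, ZMod.natCast_eq_zero_iff]
      intro hd
      have := Nat.le_of_dvd (by norm_num) hd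
      omega
    simpa using this
  have he : e ≠ 0 := by
    intro h0
    apply hj
    have h1 : -j = (0 : ZMod p) := by rw [← h, h0, mul_zero]
    linear_combination -h1
  have hn1 : ¬ IsSquare (-1 : ZMod p) := by
    rw [ZMod.exists_sq_eq_neg_one_iff]
    omega
  have hn2 : ¬ IsSquare (2 : ZMod p) := by
    rw [ZMod.exists_sq_eq_two_iff (by omega : p ≠ 2)]
    omega
  have c1 : quadraticChar (ZMod p) (-1) = -1 :=
    quadraticChar_neg_one_iff_not_isSquare.mpr hn1
  have c2 : quadraticChar (ZMod p) (2) = -1 :=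
    quadraticChar_neg_one_iff_not_isSquare.mpr hn2
  have hje : j = (-1) * (2 * e) := by linear_combination h
  rw [← quadraticChar_one_iff_isSquare he, ← quadraticChar_one_iff_isSquare hj, hje]
  rw [map_mul, map_mul, c1, c2]
  constructor <;> intro h' <;> linarith

end Aux

/-- **Character sum over `I = ⟨p⟩ ∪ 2⟨p⟩ ∪ {0}`.**
Let `p₁` be a prime with `p₁ ≡ 3 (mod 8)`, `N = 2 p₁`, and let `S ⊆ {1, …, p₁-1}` be
the set of nonzero quadratic residues modulo `p₁`. Let `ξ_N ∈ ℂ` be a primitive `N`th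
root of unity with `ξ_{p₁} = ξ_N²`, normalized so that `∑_{j ∈ S} ξ_{p₁}^j
= (-1 + i√p₁)/2`. Let `I ⊆ {0, 1, …, N-1}` consist of `0`, all odd `j ∈ [1, N-1]` whose
reduction mod `p₁` lies in `S`, and all even `j ∈ [2, N-1]` whose reduction mod `p₁` is
a quadratic nonresidue mod `p₁`. Then `∑_{i ∈ I} ξ_N^{-i} = 1 - i√p₁`. -/
theorem sum_over_I_eq (p1 : ℕ) (hp1 : p1.Prime) (hp1mod : p1 % 8 = 3)
    (S : Finset ℕ)
    (hS : ∀ j : ℕ, j ∈ S ↔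
      (1 ≤ j ∧ j ≤ p1 - 1 ∧ ∃ x : ZMod p1, x ≠ 0 ∧ (j : ZMod p1) = x ^ 2))
    (ξ : ℂ) (hξ : IsPrimitiveRoot ξ (2 * p1))
    (hsum : ∑ j ∈ S, (ξ ^ 2) ^ j = (-1 + Complex.I * Real.sqrt p1) / 2)
    (I : Finset ℕ)
    (hI : ∀ j : ℕ, j ∈ I ↔ (j = 0 ∨
      (j % 2 = 1 ∧ 1 ≤ j ∧ j ≤ 2 * p1 - 1 ∧ j % p1 ∈ S) ∨
      (j % 2 = 0 ∧ 2 ≤ j ∧ j ≤ 2 * p1 - 1 ∧ j % p1 ≠ 0 ∧ j % p1 ∉ S))) :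
    ∑ i ∈ I, ξ ^ (-(i : ℤ)) = 1 - Complex.I * Real.sqrt p1 := by
  classical
  have hfact : Fact p1.Prime := ⟨hp1⟩
  have hnz : NeZero p1 := ⟨by omega⟩
  have hp3 : 3 ≤ p1 := by
    rcases Nat.lt_or_ge p1 3 with h' | h'
    · interval_cases p1 <;> omega
    · exact h'
  have hpodd : p1 % 2 = 1 := by omega
  -- root of unity facts
  have hξ0 : ξ ≠ 0 := hξ.ne_zero (by omega)
  have hξN : ξ ^ (2 * p1) = 1 := hξ.pow_eq_one
  have hξp : ξ ^ p1 = -1 := by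
    have h2 : (ξ ^ p1) ^ 2 = 1 := by
      rw [← pow_mul, mul_comm p1 2]; exact hξN
    rcases sq_eq_one_iff.mp h2 with h | h
    · exact absurd h (hξ.pow_ne_one_of_pos_of_lt (by omega) (by omega))
    · exact h
  have hζ : IsPrimitiveRoot (ξ ^ 2) p1 := hξ.pow (by omega) rfl
  -- ZMod generalities
  have hcast_inj : ∀ a b : ℕ, a < p1 → b < p1 → (a : ZMod p1) = (b : ZMod p1) → a = b := by
    intro a b ha hb h
    have := congrArg ZMod.val h
    rwa [ZMod.val_cast_of_lt ha, ZMod.val_cast_of_lt hb] at this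
  have hmodcast : ∀ j : ℕ, ((j % p1 : ℕ) : ZMod p1) = (j : ZMod p1) := by
    intro j
    rw [ZMod.natCast_eq_natCast_iff]
    exact Nat.mod_modEq j p1
  have hne0 : ∀ j : ℕ, j % p1 ≠ 0 → (j : ZMod p1) ≠ 0 := by
    intro j hj h0
    rw [ZMod.natCast_eq_zero_iff] at h0
    obtain ⟨c, rfl⟩ := h0
    simp [Nat.mul_mod_right] at hj
  have hcast_ne0 : ∀ s : ℕ, 1 ≤ s → s ≤ p1 - 1 → (s : ZMod p1) ≠ 0 := by
    intro s h1 h2 h0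
    have := hcast_inj s 0 (by omega) (by omega) (by simpa using h0)
    omega
  have h2ne : (2 : ZMod p1) ≠ 0 := by
    have : ((2 : ℕ) : ZMod p1) ≠ 0 := by
      rw [Ne, ZMod.natCast_eq_zero_iff]
      intro hd
      have := Nat.le_of_dvd (by norm_num) hd
      omega
    simpa using this
  -- membership in S
  have memS : ∀ k : ℕ, 1 ≤ k → k ≤ p1 - 1 → (k ∈ S ↔ IsSquare ((k : ℕ) : ZMod p1)) := by
    intro k h1 h2
    rw [hS]
    constructor
    · rintro ⟨-, -, x, -, hx⟩
      exact ⟨x, by rw [hx]; ring⟩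
    · rintro ⟨x, hx⟩
      refine ⟨h1, h2, x, ?_, by rw [hx]; ring⟩
      rintro rfl
      rw [mul_zero] at hx
      have := hcast_inj k 0 (by omega) (by omega) (by simpa using hx)
      omega
  have toggle : ∀ e j : ZMod p1, 2 * e = -j → j ≠ 0 → (IsSquare e ↔ IsSquare j) :=
    fun e j h hj => toggle_lemma p1 hp1mod h hj
  -- uniqueness of representatives
  have uniq : ∀ a b : ℕ, a < 2 * p1 → b < 2 * p1 → a % 2 = b % 2 →
      (a : ZMod p1) = (b : ZMod p1) → a = b := by
    intro a b ha hb hpar h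
    have h2 : a ≡ b [MOD 2] := hpar
    have hp : a ≡ b [MOD p1] := (ZMod.natCast_eq_natCast_iff _ _ _).mp h
    have hcop : Nat.Coprime 2 p1 := Nat.coprime_two_left.mpr (Nat.odd_iff.mpr hpodd)
    have hh := (Nat.modEq_and_modEq_iff_modEq_mul hcop).mp ⟨h2, hp⟩
    have : a % (2 * p1) = b % (2 * p1) := hh
    rwa [Nat.mod_eq_of_lt ha, Nat.mod_eq_of_lt hb] at this
  -- properties of u-maps: for s in [1, p1-1], r := (-2 s).val
  have hval : ∀ s : ℕ, 1 ≤ s → s ≤ p1 - 1 →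
      ((((-2 * (s : ZMod p1)).val : ℕ) : ZMod p1) = -2 * (s : ZMod p1) ∧
       1 ≤ (-2 * (s : ZMod p1)).val ∧ (-2 * (s : ZMod p1)).val ≤ p1 - 1) := by
    intro s h1 h2
    have hr : (((-2 * (s : ZMod p1)).val : ℕ) : ZMod p1) = -2 * (s : ZMod p1) := by
      rw [ZMod.natCast_val, ZMod.cast_id]
    have hrlt : (-2 * (s : ZMod p1)).val < p1 := ZMod.val_lt _
    have hr0 : (-2 * (s : ZMod p1)).val ≠ 0 := by
      intro h0
      have : (-2 * (s : ZMod p1)) = 0 := by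
        rw [← hr, h0]; simp
      rcases mul_eq_zero.mp this with h' | h'
      · exact h2ne (by linear_combination -h')
      · exact hcast_ne0 s h1 h2 h'
    exact ⟨hr, by omega, by omega⟩
  ------------------------------------------------------------------
  -- the odd part A
  ------------------------------------------------------------------
  set A : Finset ℕ := I.filter (fun j => j % 2 = 1) with hAdef
  set B : Finset ℕ := I.filter (fun j => j % 2 = 0 ∧ j ≠ 0) with hBdef
  have hA : ∀ j ∈ A, j % 2 = 1 ∧ 1 ≤ j ∧ j ≤ 2 * p1 - 1 ∧ j % p1 ∈ S := by
    intro j hj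
    rw [hAdef, Finset.mem_filter, hI] at hj
    obtain ⟨hji, hodd⟩ := hj
    rcases hji with rfl | ⟨h1, h2, h3, h4⟩ | ⟨h0, -⟩
    · omega
    · exact ⟨h1, h2, h3, h4⟩
    · omega
  -- basic properties of e1 on A-type elements
  have he1 : ∀ j : ℕ, j % 2 = 1 → 1 ≤ j → j ≤ 2 * p1 - 1 → j % p1 ≠ 0 →
      (1 ≤ e1fun p1 j ∧ e1fun p1 j ≤ p1 - 1 ∧
        (2 : ZMod p1) * (e1fun p1 j : ZMod p1) = -(j : ZMod p1) ∧
        ξ ^ (-(j : ℤ)) = -((ξ ^ 2) ^ (e1fun p1 j))) := by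
    intro j hodd hj1 hj2 hjm
    have hjne : j ≠ p1 := by
      rintro rfl
      simp [Nat.mod_self] at hjm
    obtain ⟨c, hnat, hside⟩ : ∃ c, 2 * e1fun p1 j + j = c * p1 ∧
        ((c = 1 ∧ j < p1) ∨ (c = 3 ∧ p1 < j)) := by
      by_cases hj : j < p1
      · exact ⟨1, by simp only [e1fun, if_pos hj]; omega, Or.inl ⟨rfl, hj⟩⟩
      · exact ⟨3, by simp only [e1fun, if_neg hj]; omega, Or.inr ⟨rfl, by omega⟩⟩
    have hcodd : c = 1 ∨ c = 3 := by rcases hside with ⟨h, -⟩ | ⟨h, -⟩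
                                     · exact Or.inl h
                                     · exact Or.inr h
    refine ⟨?_, ?_, ?_, ?_⟩
    · rcases hside with ⟨rfl, hlt⟩ | ⟨rfl, hlt⟩ <;> omega
    · rcases hside with ⟨rfl, hlt⟩ | ⟨rfl, hlt⟩ <;> omega
    · have hcast : ((2 * e1fun p1 j + j : ℕ) : ZMod p1) = ((c * p1 : ℕ) : ZMod p1) := by
        rw [hnat]
      push_cast [ZMod.natCast_self] at hcast
      rw [mul_zero] at hcast
      linear_combination hcast
    · have hj' : -(j : ℤ) = ((2 * e1fun p1 j : ℕ) : ℤ) - ((c * p1 : ℕ) : ℤ) := by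
        push_cast
        omega
      rw [hj', zpow_sub₀ hξ0, zpow_natCast, zpow_natCast, pow_mul, mul_comm c p1, pow_mul,
        hξp]
      rcases hcodd with rfl | rfl <;> norm_num <;> ring
  have hmapsto1 : ∀ j ∈ A, e1fun p1 j ∈ S := by
    intro j hj
    obtain ⟨h1, h2, h3, h4⟩ := hA j hj
    obtain ⟨hm1, hm2, -⟩ := (hS _).mp h4
    obtain ⟨b1, b2, hz, -⟩ := he1 j h1 h2 h3 (by omega)
    rw [memS _ b1 b2]
    have hsq : IsSquare ((j % p1 : ℕ) : ZMod p1) := (memS _ hm1 hm2).mp h4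
    rw [hmodcast] at hsq
    exact (toggle _ _ hz (hne0 j (by omega))).mpr hsq
  -- properties of u1 on S elements
  have hu1 : ∀ s : ℕ, 1 ≤ s → s ≤ p1 - 1 →
      (u1fun p1 s % 2 = 1 ∧ 1 ≤ u1fun p1 s ∧ u1fun p1 s ≤ 2 * p1 - 1 ∧
        u1fun p1 s % p1 = (-2 * (s : ZMod p1)).val ∧
        (u1fun p1 s : ZMod p1) = -2 * (s : ZMod p1)) := by
    intro s h1 h2
    obtain ⟨hr, hr1, hr2⟩ := hval s h1 h2
    set r := (-2 * (s : ZMod p1)).val with hrdef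
    unfold u1fun
    rw [← hrdef]
    split_ifs with hpar
    · exact ⟨hpar, by omega, by omega, by rw [Nat.mod_eq_of_lt (by omega)], hr⟩
    · refine ⟨by omega, by omega, by omega, ?_, ?_⟩
      · rw [Nat.add_mod_right, Nat.mod_eq_of_lt (by omega)]
      · push_cast [ZMod.natCast_self]
        rw [add_zero]
        exact hr
  have hmapsto1' : ∀ s ∈ S, u1fun p1 s ∈ A := by
    intro s hs
    obtain ⟨hs1, hs2, -⟩ := (hS _).mp hs
    obtain ⟨hr, hr1, hr2⟩ := hval s hs1 hs2
    obtain ⟨q1, q2, q3, q4, q5⟩ := hu1 s hs1 hs2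
    have hrS : (-2 * (s : ZMod p1)).val ∈ S := by
      rw [memS _ hr1 hr2]
      have hrel : (2 : ZMod p1) * (s : ZMod p1) = -((((-2 * (s : ZMod p1)).val : ℕ) : ZMod p1)) := by
        rw [hr]; ring
      have := toggle _ _ hrel (hcast_ne0 _ hr1 hr2)
      exact this.mp ((memS _ hs1 hs2).mp hs)
    rw [hAdef, Finset.mem_filter, hI]
    refine ⟨Or.inr (Or.inl ⟨q1, q2, q3, ?_⟩), q1⟩
    rw [q4]; exact hrS
  have hli1 : ∀ j ∈ A, u1fun p1 (e1fun p1 j) = j := by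
    intro j hj
    obtain ⟨h1, h2, h3, h4⟩ := hA j hj
    obtain ⟨hm1, hm2, -⟩ := (hS _).mp h4
    obtain ⟨b1, b2, hz, -⟩ := he1 j h1 h2 h3 (by omega)
    obtain ⟨q1, q2, q3, q4, q5⟩ := hu1 _ b1 b2
    apply uniq _ _ (by omega) (by omega) (by omega)
    rw [q5]
    linear_combination -hz
  have hri1 : ∀ s ∈ S, e1fun p1 (u1fun p1 s) = s := by
    intro s hs
    obtain ⟨hs1, hs2, -⟩ := (hS _).mp hs
    obtain ⟨q1, q2, q3, q4, q5⟩ := hu1 s hs1 hs2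
    obtain ⟨hr, hr1, hr2⟩ := hval s hs1 hs2
    obtain ⟨b1, b2, hz, -⟩ := he1 _ q1 q2 q3 (by omega)
    apply hcast_inj _ _ (by omega) (by omega)
    apply mul_left_cancel₀ h2ne
    rw [hz, q5]
    ring
  have hAval : ∀ j ∈ A, ξ ^ (-(j : ℤ)) = -((ξ ^ 2) ^ (e1fun p1 j)) := by
    intro j hj
    obtain ⟨h1, h2, h3, h4⟩ := hA j hj
    obtain ⟨hm1, hm2, -⟩ := (hS _).mp h4
    exact (he1 j h1 h2 h3 (by omega)).2.2.2
  have hAsum : ∑ j ∈ A, ξ ^ (-(j : ℤ)) = ∑ s ∈ S, -((ξ ^ 2) ^ s) :=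
    Finset.sum_nbij' (e1fun p1) (u1fun p1) hmapsto1 hmapsto1' hli1 hri1 hAval
  ------------------------------------------------------------------
  -- the even part B
  ------------------------------------------------------------------
  set C : Finset ℕ := Finset.Icc 1 (p1 - 1) \ S with hCdef
  have memC : ∀ t : ℕ, t ∈ C ↔ (1 ≤ t ∧ t ≤ p1 - 1 ∧ t ∉ S) := by
    intro t
    rw [hCdef, Finset.mem_sdiff, Finset.mem_Icc]
    tauto
  have hB : ∀ j ∈ B, j % 2 = 0 ∧ 2 ≤ j ∧ j ≤ 2 * p1 - 1 ∧ j % p1 ≠ 0 ∧ j % p1 ∉ S := by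
    intro j hj
    rw [hBdef, Finset.mem_filter, hI] at hj
    obtain ⟨hji, heven, hne⟩ := hj
    rcases hji with rfl | ⟨h0, -⟩ | ⟨h1, h2, h3, h4, h5⟩
    · omega
    · omega
    · exact ⟨h1, h2, h3, h4, h5⟩
  have he2 : ∀ j : ℕ, j % 2 = 0 → 2 ≤ j → j ≤ 2 * p1 - 1 →
      (1 ≤ e2fun p1 j ∧ e2fun p1 j ≤ p1 - 1 ∧
        (2 : ZMod p1) * (e2fun p1 j : ZMod p1) = -(j : ZMod p1) ∧
        ξ ^ (-(j : ℤ)) = (ξ ^ 2) ^ (e2fun p1 j)) := by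
    intro j heven hj1 hj2
    have hnat : 2 * e2fun p1 j + j = 2 * p1 := by
      simp only [e2fun]; omega
    refine ⟨by omega, by omega, ?_, ?_⟩
    · have hcast : ((2 * e2fun p1 j + j : ℕ) : ZMod p1) = ((2 * p1 : ℕ) : ZMod p1) := by
        rw [hnat]
      push_cast [ZMod.natCast_self] at hcast
      rw [mul_zero] at hcast
      linear_combination hcast
    · have hj' : -(j : ℤ) = ((2 * e2fun p1 j : ℕ) : ℤ) - ((2 * p1 : ℕ) : ℤ) := by
        push_cast
        omega
      rw [hj', zpow_sub₀ hξ0, zpow_natCast, zpow_natCast, pow_mul, hξN, div_one]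
  have hmapsto2 : ∀ j ∈ B, e2fun p1 j ∈ C := by
    intro j hj
    obtain ⟨h1, h2, h3, h4, h5⟩ := hB j hj
    obtain ⟨b1, b2, hz, -⟩ := he2 j h1 h2 h3
    rw [memC]
    refine ⟨b1, b2, ?_⟩
    rw [memS _ b1 b2]
    intro hsq
    apply h5
    have hlt : j % p1 < p1 := Nat.mod_lt _ (by omega)
    rw [memS _ (by omega) (by omega : j % p1 ≤ p1 - 1)]
    · rw [hmodcast]
      exact ((toggle _ _ hz (hne0 j h4)).mp hsq)
  have hu2 : ∀ t : ℕ, 1 ≤ t → t ≤ p1 - 1 →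
      (u2fun p1 t % 2 = 0 ∧ 2 ≤ u2fun p1 t ∧ u2fun p1 t ≤ 2 * p1 - 1 ∧
        u2fun p1 t % p1 = (-2 * (t : ZMod p1)).val ∧
        (u2fun p1 t : ZMod p1) = -2 * (t : ZMod p1)) := by
    intro t h1 h2
    obtain ⟨hr, hr1, hr2⟩ := hval t h1 h2
    set r := (-2 * (t : ZMod p1)).val with hrdef
    unfold u2fun
    rw [← hrdef]
    split_ifs with hpar
    · exact ⟨hpar, by omega, by omega, by rw [Nat.mod_eq_of_lt (by omega)], hr⟩
    · refine ⟨by omega, by omega, by omega, ?_, ?_⟩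
      · rw [Nat.add_mod_right, Nat.mod_eq_of_lt (by omega)]
      · push_cast [ZMod.natCast_self]
        rw [add_zero]
        exact hr
  have hmapsto2' : ∀ t ∈ C, u2fun p1 t ∈ B := by
    intro t ht
    obtain ⟨ht1, ht2, ht3⟩ := (memC t).mp ht
    obtain ⟨hr, hr1, hr2⟩ := hval t ht1 ht2
    obtain ⟨q1, q2, q3, q4, q5⟩ := hu2 t ht1 ht2
    have hrS : (-2 * (t : ZMod p1)).val ∉ S := by
      rw [memS _ hr1 hr2]
      intro hsq
      apply ht3
      rw [memS _ ht1 ht2]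
      have hrel : (2 : ZMod p1) * (t : ZMod p1) = -((((-2 * (t : ZMod p1)).val : ℕ) : ZMod p1)) := by
        rw [hr]; ring
      exact (toggle _ _ hrel (hcast_ne0 _ hr1 hr2)).mpr hsq
    rw [hBdef, Finset.mem_filter, hI]
    refine ⟨Or.inr (Or.inr ⟨q1, q2, q3, ?_, ?_⟩), q1, by omega⟩
    · rw [q4]; omega
    · rw [q4]; exact hrS
  have hli2 : ∀ j ∈ B, u2fun p1 (e2fun p1 j) = j := by
    intro j hj
    obtain ⟨h1, h2, h3, h4, h5⟩ := hB j hj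
    obtain ⟨b1, b2, hz, -⟩ := he2 j h1 h2 h3
    obtain ⟨q1, q2, q3, q4, q5⟩ := hu2 _ b1 b2
    apply uniq _ _ (by omega) (by omega) (by omega)
    rw [q5]
    linear_combination -hz
  have hri2 : ∀ t ∈ C, e2fun p1 (u2fun p1 t) = t := by
    intro t ht
    obtain ⟨ht1, ht2, ht3⟩ := (memC t).mp ht
    obtain ⟨q1, q2, q3, q4, q5⟩ := hu2 t ht1 ht2
    obtain ⟨hr, hr1, hr2⟩ := hval t ht1 ht2
    obtain ⟨b1, b2, hz, -⟩ := he2 _ q1 q2 q3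
    apply hcast_inj _ _ (by omega) (by omega)
    apply mul_left_cancel₀ h2ne
    rw [hz, q5]
    ring
  have hBval : ∀ j ∈ B, ξ ^ (-(j : ℤ)) = (ξ ^ 2) ^ (e2fun p1 j) := by
    intro j hj
    obtain ⟨h1, h2, h3, h4, h5⟩ := hB j hj
    exact (he2 j h1 h2 h3).2.2.2
  have hBsum : ∑ j ∈ B, ξ ^ (-(j : ℤ)) = ∑ t ∈ C, (ξ ^ 2) ^ t :=
    Finset.sum_nbij' (e2fun p1) (u2fun p1) hmapsto2 hmapsto2' hli2 hri2 hBval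
  ------------------------------------------------------------------
  -- splitting the sum over I
  ------------------------------------------------------------------
  have hI0 : 0 ∈ I := (hI 0).mpr (Or.inl rfl)
  have hsplit : ∑ i ∈ I, ξ ^ (-(i : ℤ)) =
      ξ ^ (-((0 : ℕ) : ℤ)) + ∑ j ∈ A, ξ ^ (-(j : ℤ)) + ∑ j ∈ B, ξ ^ (-(j : ℤ)) := by
    rw [← Finset.add_sum_erase _ _ hI0]
    rw [← Finset.sum_filter_add_sum_filter_not (I.erase 0) (fun j => j % 2 = 1)]
    have e1 : (I.erase 0).filter (fun j => j % 2 = 1) = A := by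
      rw [hAdef]
      ext j
      simp only [Finset.mem_filter, Finset.mem_erase]
      constructor
      · rintro ⟨⟨h0, hi⟩, h1⟩; exact ⟨hi, h1⟩
      · rintro ⟨hi, h1⟩; exact ⟨⟨by omega, hi⟩, h1⟩
    have e2 : (I.erase 0).filter (fun j => ¬ j % 2 = 1) = B := by
      rw [hBdef]
      ext j
      simp only [Finset.mem_filter, Finset.mem_erase]
      constructor
      · rintro ⟨⟨h0, hi⟩, h1⟩; exact ⟨hi, by omega, h0⟩
      · rintro ⟨hi, h1, h0⟩; exact ⟨⟨h0, hi⟩, by omega⟩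
    rw [e1, e2, add_assoc]
  ------------------------------------------------------------------
  -- the geometric sum
  ------------------------------------------------------------------
  have hSsub : S ⊆ Finset.Icc 1 (p1 - 1) := by
    intro s hs
    rw [Finset.mem_Icc]
    obtain ⟨h1, h2, -⟩ := (hS s).mp hs
    exact ⟨h1, h2⟩
  have hIcc : ∑ t ∈ Finset.Icc 1 (p1 - 1), (ξ ^ 2) ^ t = -1 := by
    have h0 := hζ.geom_sum_eq_zero (by omega : 1 < p1)
    have hre : Finset.range p1 = insert 0 (Finset.Icc 1 (p1 - 1)) := by
      ext x
      simp only [Finset.mem_range, Finset.mem_insert, Finset.mem_Icc]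
      omega
    rw [hre, Finset.sum_insert (by simp)] at h0
    rw [pow_zero] at h0
    linear_combination h0
  have hCsum : ∑ t ∈ C, (ξ ^ 2) ^ t = -1 - ∑ s ∈ S, (ξ ^ 2) ^ s := by
    have hsd := Finset.sum_sdiff (f := fun t => (ξ ^ 2) ^ t) hSsub
    rw [hIcc] at hsd
    linear_combination hsd
  ------------------------------------------------------------------
  -- assembling
  ------------------------------------------------------------------
  rw [hsplit, hAsum, hBsum, hCsum, Finset.sum_neg_distrib, hsum]
  norm_num
  ring
end
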